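/- Let α ∈ (1/2, 1) and 0 < λ < 1/3. Let u ∈ C²([0,1]) with u(0) = u'(0) = 0 and v ∈ C¹([0,1]). Define E = ½∫₀¹ v(x)² dx + ½∫₀¹ u''(x)² dx + ½∫₀¹ v'(x)² dx and ϱ = ∫₀¹ ( v(x)(x u'(x) − α u(x)) + v'(x)((1−α)u'(x) + x u''(x)) ) dx. Then (1 − 3λ) E ≤ E + λϱ ≤ (1 + 3λ) E. -/

import Mathlib

lemma cs_aux (f : ℝ → ℝ) (hf : Continuous f) {x : ℝ} (hx : 0 ≤ x) :
    (∫ t in (0:ℝ)..x, f t)^2 ≤ x * ∫ t in (0:ℝ)..x, (f t)^2 := by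
  rcases eq_or_lt_of_le hx with h|h
  · simp [← h]
  set I := ∫ t in (0:ℝ)..x, f t with hI
  have h0 : 0 ≤ ∫ t in (0:ℝ)..x, (x * f t - I)^2 :=
    intervalIntegral.integral_nonneg hx (fun t _ => sq_nonneg _)
  have i1 : IntervalIntegrable (fun t => x^2 * (f t)^2) MeasureTheory.volume 0 x :=
    ((continuous_const.mul (hf.pow 2))).intervalIntegrable _ _
  have i2 : IntervalIntegrable (fun t => (2*x*I) * f t) MeasureTheory.volume 0 x :=
    (continuous_const.mul hf).intervalIntegrable _ _
  have hexp : ∫ t in (0:ℝ)..x, (x * f t - I)^2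
      = x^2 * (∫ t in (0:ℝ)..x, (f t)^2) - x * I^2 := by
    have e : ∀ t, (x * f t - I)^2 = x^2 * (f t)^2 - (2*x*I) * f t + I^2 := by
      intro t; ring
    simp_rw [e]
    rw [intervalIntegral.integral_add (i1.sub i2)
        (intervalIntegrable_const), intervalIntegral.integral_sub i1 i2,
        intervalIntegral.integral_const_mul, intervalIntegral.integral_const_mul,
        intervalIntegral.integral_const, ← hI]
    simp only [smul_eq_mul]
    ring
  nlinarith

lemma ftc0 (g : ℝ → ℝ) (hg : Differentiable ℝ g) (hg' : Continuous (deriv g)) (x : ℝ) :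
    ∫ t in (0:ℝ)..x, deriv g t = g x - g 0 :=
  intervalIntegral.integral_deriv_eq_sub (fun t _ => hg t) (hg'.intervalIntegrable _ _)

lemma ptw (α x a b c d e : ℝ) (h1 : 1/2 < α) (h2 : α < 1) (hx0 : 0 ≤ x) (hx1 : x ≤ 1) :
    a * (x*b - α*c) + d * ((1-α)*b + x*e)
      ≤ 1/2*a^2 + 1/2*d^2 + x^2*b^2 + c^2 + 1/2*b^2 + 2/3*(x^2*e^2) := by
  nlinarith [sq_nonneg (a - (x*b - α*c)), sq_nonneg (d - ((1-α)*b + x*e)),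
    sq_nonneg (x*b + α*c), sq_nonneg (3*(1-α)*b - x*e),
    mul_nonneg (mul_nonneg (by linarith : (0:ℝ) ≤ 1 - α) (by linarith : (0:ℝ) ≤ 1 + α)) (sq_nonneg c),
    mul_nonneg (mul_nonneg (by linarith : (0:ℝ) ≤ 1/2 - (1-α)) (by linarith : (0:ℝ) ≤ 1/2 + (1-α))) (sq_nonneg b)]

/-- Equivalence of the Lyapunov functional V = E + λϱ with the energy E:
(1 − 3λ) E ≤ E + λϱ ≤ (1 + 3λ) E. -/
theorem stmt_1 (α lam : ℝ) (hα : 1/2 < α ∧ α < 1) (hlam : 0 < lam ∧ lam < 1/3)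
    (u v : ℝ → ℝ) (hu : ContDiff ℝ 2 u) (hv : ContDiff ℝ 1 v)
    (hu0 : u 0 = 0) (hu0' : deriv u 0 = 0)
    (E ρ : ℝ)
    (hE : E = (1/2) * (∫ x in (0:ℝ)..1, (v x) ^ 2)
        + (1/2) * (∫ x in (0:ℝ)..1, (deriv (deriv u) x) ^ 2)
        + (1/2) * (∫ x in (0:ℝ)..1, (deriv v x) ^ 2))
    (hρ : ρ = ∫ x in (0:ℝ)..1,
        (v x * (x * deriv u x - α * u x)
          + deriv v x * ((1 - α) * deriv u x + x * deriv (deriv u) x))) :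
    (1 - 3 * lam) * E ≤ E + lam * ρ ∧ E + lam * ρ ≤ (1 + 3 * lam) * E := by
  obtain ⟨hα1, hα2⟩ := hα
  obtain ⟨hl1, hl2⟩ := hlam
  -- continuity / differentiability facts
  have hdu : Differentiable ℝ u := hu.differentiable (by norm_num)
  have h1 : ContDiff ℝ 1 (deriv u) := by
    have := (contDiff_succ_iff_deriv (n := 1)).mp (by exact_mod_cast hu)
    exact this.2.2
  have hcu : Continuous u := hu.continuous
  have hcu1 : Continuous (deriv u) := h1.continuous
  have hcu2 : Continuous (deriv (deriv u)) := h1.continuous_deriv le_rfl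
  have hddu : Differentiable ℝ (deriv u) := h1.differentiable one_ne_zero
  have hcv : Continuous v := hv.continuous
  have hcv1 : Continuous (deriv v) := hv.continuous_deriv le_rfl
  set U := ∫ x in (0:ℝ)..1, (deriv (deriv u) x)^2 with hU
  set U1 := ∫ x in (0:ℝ)..1, (deriv u x)^2 with hU1def
  set Vn := ∫ x in (0:ℝ)..1, (v x)^2 with hVn
  set W := ∫ x in (0:ℝ)..1, (deriv v x)^2 with hW
  have hUnn : 0 ≤ U := intervalIntegral.integral_nonneg (by norm_num) (fun t _ => sq_nonneg _)
  have hVnn : 0 ≤ Vn := intervalIntegral.integral_nonneg (by norm_num) (fun t _ => sq_nonneg _)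
  have hWnn : 0 ≤ W := intervalIntegral.integral_nonneg (by norm_num) (fun t _ => sq_nonneg _)
  -- integral of a square over [0,x] is ≤ over [0,1]
  have hmono : ∀ (h : ℝ → ℝ), Continuous h → ∀ x : ℝ, 0 ≤ x → x ≤ 1 →
      (∫ t in (0:ℝ)..x, (h t)^2) ≤ ∫ t in (0:ℝ)..1, (h t)^2 := by
    intro h hc x hx0 hx1
    have hadd := intervalIntegral.integral_add_adjacent_intervals (μ := MeasureTheory.volume)
      ((hc.pow 2).intervalIntegrable 0 x) ((hc.pow 2).intervalIntegrable x 1)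
    have h2 : 0 ≤ ∫ t in x..(1:ℝ), (h t)^2 :=
      intervalIntegral.integral_nonneg hx1 (fun t _ => sq_nonneg _)
    simp only [Pi.pow_apply] at hadd
    linarith
  -- pointwise bound on (u')²
  have hp1 : ∀ x : ℝ, 0 ≤ x → x ≤ 1 → (deriv u x)^2 ≤ x * U := by
    intro x hx0 hx1
    have e : deriv u x = ∫ t in (0:ℝ)..x, deriv (deriv u) t := by
      rw [ftc0 _ hddu hcu2, hu0']; ring
    rw [e]
    calc (∫ t in (0:ℝ)..x, deriv (deriv u) t)^2
        ≤ x * ∫ t in (0:ℝ)..x, (deriv (deriv u) t)^2 := cs_aux _ hcu2 hx0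
      _ ≤ x * U := mul_le_mul_of_nonneg_left (hmono _ hcu2 x hx0 hx1) hx0
  -- ∫ (u')² ≤ U/2
  have hU1 : U1 ≤ U / 2 := by
    have step : U1 ≤ ∫ x in (0:ℝ)..1, x * U :=
      intervalIntegral.integral_mono_on (by norm_num)
        ((hcu1.pow 2).intervalIntegrable _ _)
        ((continuous_id.mul continuous_const).intervalIntegrable _ _)
        (fun x hx => hp1 x hx.1 hx.2)
    have : (∫ x in (0:ℝ)..1, x * U) = U / 2 := by
      rw [intervalIntegral.integral_mul_const, integral_id]; ring
    linarith
  have hU1nn : 0 ≤ U1 := intervalIntegral.integral_nonneg (by norm_num) (fun t _ => sq_nonneg _)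
  -- pointwise bound on u²
  have hp0 : ∀ x : ℝ, 0 ≤ x → x ≤ 1 → (u x)^2 ≤ x * (U / 2) := by
    intro x hx0 hx1
    have e : u x = ∫ t in (0:ℝ)..x, deriv u t := by
      rw [ftc0 _ hdu hcu1, hu0]; ring
    rw [e]
    calc (∫ t in (0:ℝ)..x, deriv u t)^2
        ≤ x * ∫ t in (0:ℝ)..x, (deriv u t)^2 := cs_aux _ hcu1 hx0
      _ ≤ x * (U / 2) := by
          have := hmono _ hcu1 x hx0 hx1
          have : (∫ t in (0:ℝ)..x, (deriv u t)^2) ≤ U / 2 := le_trans this hU1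
          exact mul_le_mul_of_nonneg_left this hx0
  -- ∫ u² ≤ U/4
  have hB : (∫ x in (0:ℝ)..1, (u x)^2) ≤ U / 4 := by
    have step : (∫ x in (0:ℝ)..1, (u x)^2) ≤ ∫ x in (0:ℝ)..1, x * (U / 2) :=
      intervalIntegral.integral_mono_on (by norm_num)
        ((hcu.pow 2).intervalIntegrable _ _)
        ((continuous_id.mul continuous_const).intervalIntegrable _ _)
        (fun x hx => hp0 x hx.1 hx.2)
    have : (∫ x in (0:ℝ)..1, x * (U / 2)) = U / 4 := by
      rw [intervalIntegral.integral_mul_const, integral_id]; ring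
    linarith
  -- ∫ x²(u')² ≤ U/3
  have hA : (∫ x in (0:ℝ)..1, x^2 * (deriv u x)^2) ≤ U / 3 := by
    have step : (∫ x in (0:ℝ)..1, x^2 * (deriv u x)^2) ≤ ∫ x in (0:ℝ)..1, x^2 * U := by
      refine intervalIntegral.integral_mono_on (by norm_num)
        (((continuous_pow 2).mul (hcu1.pow 2)).intervalIntegrable _ _)
        (((continuous_pow 2).mul continuous_const).intervalIntegrable _ _)
        (fun x hx => ?_)
      have h' : (deriv u x)^2 ≤ U := le_trans (hp1 x hx.1 hx.2)
        (by nlinarith [hp1 x hx.1 hx.2, hx.1, hx.2, hUnn])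
      exact mul_le_mul_of_nonneg_left h' (sq_nonneg x)
    have : (∫ x in (0:ℝ)..1, x^2 * U) = U / 3 := by
      rw [intervalIntegral.integral_mul_const, integral_pow]; ring
    linarith
  -- ∫ x²(u'')² ≤ U
  have hC : (∫ x in (0:ℝ)..1, x^2 * (deriv (deriv u) x)^2) ≤ U := by
    refine intervalIntegral.integral_mono_on (by norm_num)
      (((continuous_pow 2).mul (hcu2.pow 2)).intervalIntegrable _ _)
      ((hcu2.pow 2).intervalIntegrable _ _)
      (fun x hx => ?_)
    have hx2 : x^2 ≤ 1 := by nlinarith [hx.1, hx.2]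
    nlinarith [sq_nonneg (deriv (deriv u) x), hx2]
  have hCnn : 0 ≤ ∫ x in (0:ℝ)..1, x^2 * (deriv (deriv u) x)^2 :=
    intervalIntegral.integral_nonneg (by norm_num)
      (fun t ht => mul_nonneg (sq_nonneg _) (sq_nonneg _))
  -- the majorant P and its integral
  set P : ℝ → ℝ := fun x => 1/2*(v x)^2 + 1/2*(deriv v x)^2 + x^2*(deriv u x)^2
      + (u x)^2 + 1/2*(deriv u x)^2 + 2/3*(x^2*(deriv (deriv u) x)^2) with hP
  have hPc : Continuous P := by
    apply Continuous.add
    apply Continuous.add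
    apply Continuous.add
    apply Continuous.add
    apply Continuous.add
    · exact continuous_const.mul (hcv.pow 2)
    · exact continuous_const.mul (hcv1.pow 2)
    · exact (continuous_pow 2).mul (hcu1.pow 2)
    · exact hcu.pow 2
    · exact continuous_const.mul (hcu1.pow 2)
    · exact continuous_const.mul ((continuous_pow 2).mul (hcu2.pow 2))
  have int1 : IntervalIntegrable (fun x : ℝ => 1/2*(v x)^2) MeasureTheory.volume 0 1 :=
    (continuous_const.mul (hcv.pow 2)).intervalIntegrable _ _
  have int2 : IntervalIntegrable (fun x : ℝ => 1/2*(deriv v x)^2) MeasureTheory.volume 0 1 :=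
    (continuous_const.mul (hcv1.pow 2)).intervalIntegrable _ _
  have int3 : IntervalIntegrable (fun x : ℝ => x^2*(deriv u x)^2) MeasureTheory.volume 0 1 :=
    ((continuous_pow 2).mul (hcu1.pow 2)).intervalIntegrable _ _
  have int4 : IntervalIntegrable (fun x : ℝ => (u x)^2) MeasureTheory.volume 0 1 :=
    (hcu.pow 2).intervalIntegrable _ _
  have int5 : IntervalIntegrable (fun x : ℝ => 1/2*(deriv u x)^2) MeasureTheory.volume 0 1 :=
    (continuous_const.mul (hcu1.pow 2)).intervalIntegrable _ _
  have int6 : IntervalIntegrable (fun x : ℝ => 2/3*(x^2*(deriv (deriv u) x)^2)) MeasureTheory.volume 0 1 :=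
    (continuous_const.mul ((continuous_pow 2).mul (hcu2.pow 2))).intervalIntegrable _ _
  have hPsplit : (∫ x in (0:ℝ)..1, P x)
      = 1/2*Vn + 1/2*W + (∫ x in (0:ℝ)..1, x^2 * (deriv u x)^2)
        + (∫ x in (0:ℝ)..1, (u x)^2) + 1/2*U1
        + 2/3*(∫ x in (0:ℝ)..1, x^2*(deriv (deriv u) x)^2) := by
    simp only [hP]
    rw [intervalIntegral.integral_add (((((int1.add int2).add int3).add int4).add int5)) int6,
        intervalIntegral.integral_add ((((int1.add int2).add int3).add int4)) int5,
        intervalIntegral.integral_add (((int1.add int2).add int3)) int4,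
        intervalIntegral.integral_add ((int1.add int2)) int3,
        intervalIntegral.integral_add int1 int2,
        intervalIntegral.integral_const_mul, intervalIntegral.integral_const_mul,
        intervalIntegral.integral_const_mul, intervalIntegral.integral_const_mul]
  have hPb : (∫ x in (0:ℝ)..1, P x) ≤ 3 * E := by
    rw [hPsplit, hE]
    have h32 : U/3 + U/4 + (1/2)*(U/2) + (2/3)*U ≤ (3/2)*U := by ring_nf; linarith
    have h5 : 2/3*(∫ x in (0:ℝ)..1, x^2*(deriv (deriv u) x)^2) ≤ 2/3*U := by linarith
    linarith [hA, hB, hU1]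
  -- continuity of ρ's integrand
  have hρc : Continuous (fun x : ℝ => v x * (x * deriv u x - α * u x)
      + deriv v x * ((1 - α) * deriv u x + x * deriv (deriv u) x)) := by
    apply Continuous.add
    · exact hcv.mul ((continuous_id.mul hcu1).sub (continuous_const.mul hcu))
    · exact hcv1.mul ((continuous_const.mul hcu1).add (continuous_id.mul hcu2))
  -- ρ ≤ ∫ P and -ρ ≤ ∫ P
  have hub : ρ ≤ ∫ x in (0:ℝ)..1, P x := by
    rw [hρ]
    refine intervalIntegral.integral_mono_on (by norm_num)
      (hρc.intervalIntegrable _ _) (hPc.intervalIntegrable _ _) (fun x hx => ?_)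
    simp only [hP]
    exact ptw α x (v x) (deriv u x) (u x) (deriv v x) (deriv (deriv u) x) hα1 hα2 hx.1 hx.2
  have hlb : -ρ ≤ ∫ x in (0:ℝ)..1, P x := by
    rw [hρ, ← intervalIntegral.integral_neg]
    refine intervalIntegral.integral_mono_on (by norm_num)
      (hρc.neg.intervalIntegrable _ _) (hPc.intervalIntegrable _ _) (fun x hx => ?_)
    have := ptw α x (-(v x)) (deriv u x) (u x) (-(deriv v x)) (deriv (deriv u) x) hα1 hα2 hx.1 hx.2
    simp only [hP]
    ring_nf at this ⊢
    linarith [this]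
  clear_value P U U1 Vn W
  have habs1 : -(3*E) ≤ ρ := by linarith
  have habs2 : ρ ≤ 3*E := by linarith
  have m1 := mul_le_mul_of_nonneg_left habs1 hl1.le
  have m2 := mul_le_mul_of_nonneg_left habs2 hl1.le
  constructor
  · linarith [m1]
  · linarith [m2]
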